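/- Let c ∈ ℝ and Ū ∈ ℝ². On the open set O = {D ∈ ℝ² : |D₁+D₂| < 1}, let u(D) ∈ ℝ² be the unique solution of the linear system −(u₁ − Ū₁) + (u₂ − c)(D₁+D₂) − D₁ = 0, −(u₂ − Ū₂) + (u₁ − c)(D₁+D₂) − D₂ = 0, and define S(D) = 𝓛(u(D), D, Ū). Then S is differentiable on O and its gradient satisfies ∇S(D) = 𝔔_c(u(D)) for every D ∈ O. -/

import Mathlib

/-- The toy-model map `𝔔_c : ℝ² → ℝ²`, `(𝔔_c(U))_i = (U₁−c)(U₂−c) − (U_i−c)`. -/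
def Qc (c : ℝ) (U : ℝ × ℝ) : ℝ × ℝ :=
  ((U.1 - c) * (U.2 - c) - (U.1 - c), (U.1 - c) * (U.2 - c) - (U.2 - c))

/-- The toy-model pre-dual Lagrangian
`𝓛(U,D,Ū) = (U₁−c)(U₂−c)(D₁+D₂) − (U₁−c)D₁ − (U₂−c)D₂ − ½|U−Ū|²`. -/
noncomputable def Ltoy (c : ℝ) (U D Ub : ℝ × ℝ) : ℝ :=
  (U.1 - c) * (U.2 - c) * (D.1 + D.2) - (U.1 - c) * D.1 - (U.2 - c) * D.2
    - (1 / 2) * ((U.1 - Ub.1) ^ 2 + (U.2 - Ub.2) ^ 2)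

/-- Explicit solution of the DtP linear system. -/
noncomputable def vfun (c : ℝ) (Ub : ℝ × ℝ) (D : ℝ × ℝ) : ℝ × ℝ :=
  (c + ((Ub.1 - c) + (Ub.2 - c) * (D.1 + D.2) - D.1 - (D.1 + D.2) * D.2) * (1 - (D.1 + D.2) ^ 2)⁻¹,
   c + ((Ub.2 - c) + (Ub.1 - c) * (D.1 + D.2) - D.2 - (D.1 + D.2) * D.1) * (1 - (D.1 + D.2) ^ 2)⁻¹)

lemma vfun_diff1 (c : ℝ) (Ub : ℝ × ℝ) (D : ℝ × ℝ) (hD : |D.1 + D.2| < 1) :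
    DifferentiableAt ℝ (fun D' => (vfun c Ub D').1) D := by
  have habs := abs_lt.mp hD
  have hs2' : (fun D' : ℝ × ℝ => 1 - (D'.1 + D'.2) ^ 2) D ≠ 0 := by
    show (1 : ℝ) - (D.1 + D.2) ^ 2 ≠ 0; nlinarith
  have hden : DifferentiableAt ℝ (fun D' : ℝ × ℝ => 1 - (D'.1 + D'.2) ^ 2) D := by fun_prop
  have hn1 : DifferentiableAt ℝ
      (fun D' : ℝ × ℝ => (Ub.1 - c) + (Ub.2 - c) * (D'.1 + D'.2) - D'.1 - (D'.1 + D'.2) * D'.2) D := by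
    fun_prop
  simp only [vfun]
  exact (hn1.mul (hden.inv hs2')).const_add c

lemma vfun_diff2 (c : ℝ) (Ub : ℝ × ℝ) (D : ℝ × ℝ) (hD : |D.1 + D.2| < 1) :
    DifferentiableAt ℝ (fun D' => (vfun c Ub D').2) D := by
  have habs := abs_lt.mp hD
  have hs2' : (fun D' : ℝ × ℝ => 1 - (D'.1 + D'.2) ^ 2) D ≠ 0 := by
    show (1 : ℝ) - (D.1 + D.2) ^ 2 ≠ 0; nlinarith
  have hden : DifferentiableAt ℝ (fun D' : ℝ × ℝ => 1 - (D'.1 + D'.2) ^ 2) D := by fun_prop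
  have hn2 : DifferentiableAt ℝ
      (fun D' : ℝ × ℝ => (Ub.2 - c) + (Ub.1 - c) * (D'.1 + D'.2) - D'.2 - (D'.1 + D'.2) * D'.1) D := by
    fun_prop
  simp only [vfun]
  exact (hn2.mul (hden.inv hs2')).const_add c

lemma vfun_unique (c : ℝ) (Ub : ℝ × ℝ) (w : ℝ × ℝ) (D : ℝ × ℝ) (hD : |D.1 + D.2| < 1)
    (h1 : -(w.1 - Ub.1) + (w.2 - c) * (D.1 + D.2) - D.1 = 0)
    (h2 : -(w.2 - Ub.2) + (w.1 - c) * (D.1 + D.2) - D.2 = 0) :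
    w = vfun c Ub D := by
  have habs := abs_lt.mp hD
  have hs2 : 1 - (D.1 + D.2) ^ 2 ≠ 0 := by nlinarith
  have k1 : w.1 - c = ((Ub.1 - c) + (Ub.2 - c) * (D.1 + D.2) - D.1 - (D.1 + D.2) * D.2) / (1 - (D.1 + D.2) ^ 2) := by
    rw [eq_div_iff hs2]; linear_combination (-1 : ℝ) * h1 - (D.1 + D.2) * h2
  have k2 : w.2 - c = ((Ub.2 - c) + (Ub.1 - c) * (D.1 + D.2) - D.2 - (D.1 + D.2) * D.1) / (1 - (D.1 + D.2) ^ 2) := by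
    rw [eq_div_iff hs2]; linear_combination (-1 : ℝ) * h2 - (D.1 + D.2) * h1
  rw [div_eq_mul_inv] at k1 k2
  ext
  · simp only [vfun]; linarith [k1]
  · simp only [vfun]; linarith [k2]

/-- on the open set `O = {|D₁+D₂| < 1}`, if `u(D)` solves the DtP linear
system, then `S(D) = 𝓛(u(D),D,Ū)` is differentiable on `O` with gradient
`∇S(D) = 𝔔_c(u(D))` (envelope theorem). -/
theorem stmt14 (c : ℝ) (Ub : ℝ × ℝ) (u : ℝ × ℝ → ℝ × ℝ)
    (hu : ∀ D : ℝ × ℝ, |D.1 + D.2| < 1 →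
      (-((u D).1 - Ub.1) + ((u D).2 - c) * (D.1 + D.2) - D.1 = 0 ∧
       -((u D).2 - Ub.2) + ((u D).1 - c) * (D.1 + D.2) - D.2 = 0)) :
    ∀ D : ℝ × ℝ, |D.1 + D.2| < 1 →
      DifferentiableAt ℝ (fun D' => Ltoy c (u D') D' Ub) D ∧
      ∀ h : ℝ × ℝ, fderiv ℝ (fun D' => Ltoy c (u D') D' Ub) D h
        = (Qc c (u D)).1 * h.1 + (Qc c (u D)).2 * h.2 := by
  intro D hD
  have huv : ∀ D' : ℝ × ℝ, |D'.1 + D'.2| < 1 → u D' = vfun c Ub D' := fun D' hD' =>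
    vfun_unique c Ub (u D') D' hD' (hu D' hD').1 (hu D' hD').2
  have hO : IsOpen {D' : ℝ × ℝ | |D'.1 + D'.2| < 1} :=
    isOpen_lt (by fun_prop) continuous_const
  have heq : (fun D' => Ltoy c (u D') D' Ub) =ᶠ[nhds D]
      (fun D' => ((vfun c Ub D').1 - c) * ((vfun c Ub D').2 - c) * (D'.1 + D'.2)
        - ((vfun c Ub D').1 - c) * D'.1 - ((vfun c Ub D').2 - c) * D'.2
        - (1 / 2) * (((vfun c Ub D').1 - Ub.1) * ((vfun c Ub D').1 - Ub.1)
            + ((vfun c Ub D').2 - Ub.2) * ((vfun c Ub D').2 - Ub.2))) := by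
    filter_upwards [hO.mem_nhds hD] with D' hD'
    rw [huv D' hD']; simp only [Ltoy]; ring
  have ha := vfun_diff1 c Ub D hD
  have hb := vfun_diff2 c Ub D hD
  set A1 := fderiv ℝ (fun D' => (vfun c Ub D').1) D with hA1
  set B1 := fderiv ℝ (fun D' => (vfun c Ub D').2) D with hB1
  have Ha : HasFDerivAt (fun D' => (vfun c Ub D').1) A1 D := ha.hasFDerivAt
  have Hb : HasFDerivAt (fun D' => (vfun c Ub D').2) B1 D := hb.hasFDerivAt
  have Hac : HasFDerivAt (fun D' => (vfun c Ub D').1 - c) A1 D := Ha.sub_const c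
  have Hbc : HasFDerivAt (fun D' => (vfun c Ub D').2 - c) B1 D := Hb.sub_const c
  have Hau : HasFDerivAt (fun D' => (vfun c Ub D').1 - Ub.1) A1 D := Ha.sub_const Ub.1
  have Hbu : HasFDerivAt (fun D' => (vfun c Ub D').2 - Ub.2) B1 D := Hb.sub_const Ub.2
  have Hz : HasFDerivAt (fun D' : ℝ × ℝ => D'.1) (ContinuousLinearMap.fst ℝ ℝ ℝ) D :=
    hasFDerivAt_fst
  have Hw : HasFDerivAt (fun D' : ℝ × ℝ => D'.2) (ContinuousLinearMap.snd ℝ ℝ ℝ) D :=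
    hasFDerivAt_snd
  have HS' := ((((Hac.mul Hbc).mul (Hz.add Hw)).sub (Hac.mul Hz)).sub (Hbc.mul Hw)).sub
    (((Hau.mul Hau).add (Hbu.mul Hbu)).const_mul (1/2 : ℝ))
  constructor
  · exact heq.differentiableAt_iff.mpr HS'.differentiableAt
  · intro h
    rw [heq.fderiv_eq]; erw [HS'.fderiv]
    have e1 := (hu D hD).1
    have e2 := (hu D hD).2
    rw [huv D hD] at e1 e2
    simp only [Qc, huv D hD, ContinuousLinearMap.add_apply, ContinuousLinearMap.sub_apply,
      ContinuousLinearMap.smul_apply, ContinuousLinearMap.coe_fst', ContinuousLinearMap.coe_snd', smul_eq_mul, Pi.mul_apply, Pi.add_apply]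
    ring_nf
    linear_combination (A1 h) * e1 + (B1 h) * e2
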